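/- For every countable subset C ⊆ I there exists a reparametrization φ : I → I whose set of φ-stop values is exactly C, i.e. C_φ = C. -/

import Mathlib

open unitInterval

/-- `φ` is a reparametrization of the unit interval: a continuous weakly
increasing self-map of `I` with `φ 0 = 0` and `φ 1 = 1` (such a map is
automatically surjective). -/
def IsRepar (φ : I → I) : Prop :=
  Continuous φ ∧ Monotone φ ∧ φ 0 = 0 ∧ φ 1 = 1

/-- `p` is constant on the closed subinterval `[a, b]` of `I`. -/
def ConstOn {X : Type*} (p : I → X) (a b : I) : Prop :=
  ∀ s ∈ Set.Icc a b, ∀ t ∈ Set.Icc a b, p s = p t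

/-- `[a, b]` is a `p`-stop interval: a nondegenerate closed subinterval of `I`
on which `p` is constant, maximal (w.r.t. inclusion) among nondegenerate closed
subintervals on which `p` is constant. -/
def IsStopInterval {X : Type*} (p : I → X) (a b : I) : Prop :=
  a < b ∧ ConstOn p a b ∧
    ∀ a' b' : I, a' ≤ a → b ≤ b' → ConstOn p a' b' → a' = a ∧ b' = b

/-- The set `C_p` of `p`-stop values: the constant values taken by `p`
on its stop intervals. -/
def StopValues {X : Type*} (p : I → X) : Set X :=
  {c | ∃ a b : I, IsStopInterval p a b ∧ p a = c}

section AuxConstruction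
open Set

noncomputable section StaircaseAux

/-- weights -/
def w (n : ℕ) : ℝ := 1/2/2^n

lemma w_pos (n : ℕ) : 0 < w n := by unfold w; positivity

lemma w_summable : Summable w := summable_geometric_two' 1

lemma w_tsum : ∑' n, w n = 1 := tsum_geometric_two' 1

lemma summable_ite (P : ℕ → Prop) [DecidablePred P] :
    Summable (fun n => if P n then w n else 0) := by
  refine Summable.of_nonneg_of_le (fun n => ?_) (fun n => ?_) w_summable <;>
    by_cases h : P n <;> simp [h, (w_pos n).le]

lemma tsum_ite_mono {P Q : ℕ → Prop} [DecidablePred P] [DecidablePred Q]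
    (h : ∀ n, P n → Q n) :
    (∑' n, if P n then w n else 0) ≤ ∑' n, if Q n then w n else 0 := by
  refine Summable.tsum_le_tsum (fun n => ?_) (summable_ite P) (summable_ite Q)
  by_cases hp : P n
  · simp [hp, h n hp]
  · simp only [hp, if_false]
    by_cases hq : Q n <;> simp [hq, (w_pos n).le]

lemma tsum_ite_nonneg (P : ℕ → Prop) [DecidablePred P] :
    0 ≤ ∑' n, if P n then w n else 0 := by
  refine tsum_nonneg fun n => ?_
  by_cases h : P n <;> simp [h, (w_pos n).le]

lemma tsum_ite_le_one (P : ℕ → Prop) [DecidablePred P] :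
    (∑' n, if P n then w n else 0) ≤ 1 := by
  rw [← w_tsum]
  refine Summable.tsum_le_tsum (fun n => ?_) (summable_ite P) w_summable
  by_cases h : P n <;> simp [h, (w_pos n).le]

lemma tsum_w_tail (N : ℕ) : (∑' n, if N ≤ n then w n else 0) = 1/2^N := by
  have hs := summable_ite (fun n => N ≤ n)
  have h := Summable.sum_add_tsum_nat_add (f := fun n => if N ≤ n then w n else 0) N hs
  have h0 : (∑ i ∈ Finset.range N, if N ≤ i then w i else 0) = 0 := by
    refine Finset.sum_eq_zero fun i hi => ?_
    simp [Nat.not_le.mpr (Finset.mem_range.mp hi)]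
  have h1 : (∑' k : ℕ, if N ≤ k + N then w (k + N) else 0) = ∑' k, w k * (1/2^N) := by
    refine tsum_congr fun k => ?_
    rw [if_pos (Nat.le_add_left N k)]
    unfold w; rw [pow_add]; ring
  rw [h0, zero_add, h1] at h
  rw [← h, tsum_mul_right, w_tsum, one_mul]

lemma tsum_ite_le_add (P Q : ℕ → Prop) [DecidablePred P] [DecidablePred Q] (N : ℕ)
    (h : ∀ n, n < N → P n → Q n) :
    (∑' n, if P n then w n else 0) ≤ (∑' n, if Q n then w n else 0) + 1/2^N := by
  rw [← tsum_w_tail N, ← Summable.tsum_add (summable_ite Q) (summable_ite (fun n => N ≤ n))]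
  refine Summable.tsum_le_tsum (fun n => ?_) (summable_ite P)
    ((summable_ite Q).add (summable_ite (fun n => N ≤ n)))
  by_cases hp : P n
  · by_cases hn : n < N
    · simp [hp, h n hn hp, Nat.not_le.mpr hn]
    · rw [if_pos hp, if_pos (Nat.not_lt.mp hn)]
      have : (0:ℝ) ≤ if Q n then w n else 0 := by
        by_cases hq : Q n <;> simp [hq, (w_pos n).le]
      linarith
  · rw [if_neg hp]
    have h1 : (0:ℝ) ≤ if Q n then w n else 0 := by
      by_cases hq : Q n <;> simp [hq, (w_pos n).le]
    have h2 : (0:ℝ) ≤ if N ≤ n then w n else 0 := by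
      by_cases hq : N ≤ n <;> simp [hq, (w_pos n).le]
    linarith

lemma exists_tail_small {ε : ℝ} (hε : 0 < ε) : ∃ N : ℕ, (1:ℝ)/2^N < ε := by
  obtain ⟨N, hN⟩ := exists_pow_lt_of_lt_one hε (by norm_num : (1:ℝ)/2 < 1)
  exact ⟨N, by rwa [div_pow, one_pow] at hN⟩

variable (f : ℕ → I)

/-- sum of weights of indices with value `< x` -/
def sLt (x : ℝ) : ℝ := ∑' n, if (f n : ℝ) < x then w n else 0

/-- sum of weights of indices with value `≤ x` -/
def sLe (x : ℝ) : ℝ := ∑' n, if (f n : ℝ) ≤ x then w n else 0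

/-- the jump function -/
def psi (x : ℝ) : ℝ := x + sLt f x

lemma sLt_nonneg (x : ℝ) : 0 ≤ sLt f x := tsum_ite_nonneg _
lemma sLe_nonneg (x : ℝ) : 0 ≤ sLe f x := tsum_ite_nonneg _
lemma sLt_le_one (x : ℝ) : sLt f x ≤ 1 := tsum_ite_le_one _
lemma sLe_le_one (x : ℝ) : sLe f x ≤ 1 := tsum_ite_le_one _

lemma sLt_mono {x y : ℝ} (h : x ≤ y) : sLt f x ≤ sLt f y :=
  tsum_ite_mono fun n hn => lt_of_lt_of_le hn h

lemma sLt_le_sLe (x : ℝ) : sLt f x ≤ sLe f x :=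
  tsum_ite_mono fun n hn => le_of_lt hn

lemma sLe_le_sLt {c x : ℝ} (h : c < x) : sLe f c ≤ sLt f x :=
  tsum_ite_mono fun n hn => lt_of_le_of_lt hn h

lemma sLt_eq_zero {x : ℝ} (hx : x ≤ 0) : sLt f x = 0 := by
  unfold sLt
  have h : ∀ n, (if (f n : ℝ) < x then w n else 0) = 0 := fun n =>
    if_neg (not_lt.mpr (le_trans hx (f n).2.1))
  rw [tsum_congr h, tsum_zero]

lemma psi_gap {x y : ℝ} (h : x ≤ y) : psi f x + (y - x) ≤ psi f y := by
  have := sLt_mono f h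
  unfold psi; linarith

lemma psi_strictMono {x y : ℝ} (h : x < y) : psi f x < psi f y := by
  have := psi_gap f h.le; linarith

lemma psi_zero : psi f 0 = 0 := by
  unfold psi; rw [sLt_eq_zero f le_rfl, add_zero]

lemma psi_nonneg {x : ℝ} (hx : 0 ≤ x) : 0 ≤ psi f x := by
  have := sLt_nonneg f x; unfold psi; linarith

lemma psi_le_two {x : ℝ} (hx : x ≤ 1) : psi f x ≤ 2 := by
  have := sLt_le_one f x; unfold psi; linarith

/-- left continuity estimate -/
lemma psi_left (c : ℝ) {ε : ℝ} (hε : 0 < ε) :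
    ∃ x, x < c ∧ psi f c ≤ psi f x + ε := by
  obtain ⟨N, hN⟩ := exists_tail_small (by linarith : 0 < ε/2)
  classical
  set F := (Finset.range N).filter (fun n => (f n : ℝ) < c) with hF
  set G : Finset ℝ := insert (c - ε/2) (F.image fun n => (f n : ℝ)) with hG
  have hGne : G.Nonempty := Finset.insert_nonempty _ _
  set x₀ := G.max' hGne with hx0
  have hx₀c : x₀ < c := by
    rw [hx0, Finset.max'_lt_iff]
    intro y hy
    rw [hG, Finset.mem_insert] at hy
    rcases hy with rfl | hy
    · linarith
    · obtain ⟨n, hn, rfl⟩ := Finset.mem_image.mp hy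
      exact (Finset.mem_filter.mp hn).2
  have hx₀ge : c - ε/2 ≤ x₀ := Finset.le_max' _ _ (Finset.mem_insert_self _ _)
  refine ⟨(x₀ + c)/2, by linarith, ?_⟩
  have hxgt : x₀ < (x₀ + c)/2 := by linarith
  have hxc : (x₀ + c)/2 < c := by linarith
  have hkey : sLt f c ≤ sLt f ((x₀ + c)/2) + 1/2^N := by
    refine tsum_ite_le_add _ _ N fun n hn hlt => ?_
    have hmem : (f n : ℝ) ∈ G := by
      rw [hG, Finset.mem_insert]
      right
      exact Finset.mem_image.mpr ⟨n, Finset.mem_filter.mpr ⟨Finset.mem_range.mpr hn, hlt⟩, rfl⟩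
    have := Finset.le_max' _ _ hmem
    linarith
  have hcx : c - (x₀ + c)/2 ≤ ε/2 := by linarith
  unfold psi; linarith

/-- right continuity estimate -/
lemma psi_right {c : ℝ} (hc0 : 0 ≤ c) (hc1 : c < 1) {ε : ℝ} (hε : 0 < ε) :
    ∃ x, c < x ∧ x ≤ 1 ∧ psi f x ≤ c + sLe f c + ε := by
  obtain ⟨N, hN⟩ := exists_tail_small (by linarith : 0 < ε/2)
  classical
  set F := (Finset.range N).filter (fun n => c < (f n : ℝ)) with hF
  set G : Finset ℝ := insert 1 (insert (c + ε/2) (F.image fun n => (f n : ℝ))) with hG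
  have hGne : G.Nonempty := Finset.insert_nonempty _ _
  set x := G.min' hGne with hx
  have hcx : c < x := by
    rw [hx, Finset.lt_min'_iff]
    intro y hy
    rw [hG, Finset.mem_insert, Finset.mem_insert] at hy
    rcases hy with rfl | rfl | hy
    · exact hc1
    · linarith
    · obtain ⟨n, hn, rfl⟩ := Finset.mem_image.mp hy
      exact (Finset.mem_filter.mp hn).2
  have hx1 : x ≤ 1 := Finset.min'_le _ _ (by rw [hG]; exact Finset.mem_insert_self _ _)
  have hxε : x ≤ c + ε/2 := Finset.min'_le _ _ (by
    rw [hG]; exact Finset.mem_insert_of_mem (Finset.mem_insert_self _ _))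
  refine ⟨x, hcx, hx1, ?_⟩
  have hkey : sLt f x ≤ sLe f c + 1/2^N := by
    refine tsum_ite_le_add _ _ N fun n hn hlt => ?_
    by_contra hgt
    push_neg at hgt
    have hmem : (f n : ℝ) ∈ G := by
      rw [hG, Finset.mem_insert, Finset.mem_insert]
      right; right
      exact Finset.mem_image.mpr ⟨n, Finset.mem_filter.mpr ⟨Finset.mem_range.mpr hn, hgt⟩, rfl⟩
    have := Finset.min'_le _ _ hmem
    linarith
  unfold psi; linarith

/-- the set whose sup defines the inverse -/
def Aset (t : ℝ) : Set ℝ := {x | x ∈ Icc (0:ℝ) 1 ∧ psi f x ≤ 2*t}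

lemma Aset_bdd (t : ℝ) : BddAbove (Aset f t) :=
  ⟨1, fun x hx => hx.1.2⟩

lemma Aset_zero_mem {t : ℝ} (ht : 0 ≤ t) : 0 ∈ Aset f t :=
  ⟨⟨le_rfl, zero_le_one⟩, by rw [psi_zero]; linarith⟩

/-- the staircase function -/
def gfun (t : ℝ) : ℝ := sSup (Aset f t)

lemma gfun_mem {t : ℝ} (ht : 0 ≤ t) : gfun f t ∈ Icc (0:ℝ) 1 :=
  ⟨le_csSup (Aset_bdd f t) (Aset_zero_mem f ht),
   csSup_le ⟨0, Aset_zero_mem f ht⟩ fun x hx => hx.1.2⟩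

lemma gfun_mono {t t' : ℝ} (ht : 0 ≤ t) (h : t ≤ t') : gfun f t ≤ gfun f t' :=
  csSup_le_csSup (Aset_bdd f t') ⟨0, Aset_zero_mem f ht⟩
    (fun x hx => ⟨hx.1, by linarith [hx.2]⟩)

lemma gfun_eq_self {x : ℝ} (hx : x ∈ Icc (0:ℝ) 1) : gfun f (psi f x / 2) = x := by
  have hxA : x ∈ Aset f (psi f x / 2) := ⟨hx, by linarith⟩
  refine le_antisymm (csSup_le ⟨x, hxA⟩ fun y hy => ?_) (le_csSup (Aset_bdd f _) hxA)
  by_contra hlt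
  push_neg at hlt
  have := psi_gap f hlt.le
  have h2 : psi f y ≤ psi f x := by
    have := hy.2; linarith
  linarith

lemma gfun_const {c t : ℝ} (hc : c ∈ Icc (0:ℝ) 1) (h1 : psi f c ≤ 2*t)
    (h2 : 2*t ≤ c + sLe f c) : gfun f t = c := by
  have hcA : c ∈ Aset f t := ⟨hc, h1⟩
  refine le_antisymm (csSup_le ⟨c, hcA⟩ fun y hy => ?_) (le_csSup (Aset_bdd f _) hcA)
  by_contra hlt
  push_neg at hlt
  have hy2 := hy.2
  have hsle : sLe f c ≤ sLt f y := sLe_le_sLt f hlt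
  have : psi f y = y + sLt f y := rfl
  unfold psi at hy2
  linarith

lemma gfun_one : gfun f 1 = 1 := by
  have h1A : (1:ℝ) ∈ Aset f 1 := ⟨⟨zero_le_one, le_rfl⟩, by
    have := psi_le_two f (le_refl (1:ℝ)); linarith⟩
  exact le_antisymm (csSup_le ⟨1, h1A⟩ fun x hx => hx.1.2) (le_csSup (Aset_bdd f _) h1A)

end StaircaseAux

noncomputable section PhiSec

variable (f : ℕ → I)

/-- the reparametrization -/
def Phi : I → I := fun t => ⟨gfun f t, gfun_mem f t.2.1⟩

lemma Phi_coe (t : I) : (Phi f t : ℝ) = gfun f (t : ℝ) := rfl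

lemma Phi_mono : Monotone (Phi f) := fun t t' h =>
  Subtype.mk_le_mk.mpr (gfun_mono f t.2.1 (Subtype.coe_le_coe.mpr h))

lemma Phi_surj : Function.Surjective (Phi f) := by
  intro x
  refine ⟨⟨psi f (x : ℝ) / 2, ?_, ?_⟩, Subtype.ext (gfun_eq_self f x.2)⟩
  · have := psi_nonneg f x.2.1; linarith
  · have := psi_le_two f x.2.2; linarith

lemma Phi_zero : Phi f 0 = 0 := by
  refine Subtype.ext ?_
  show gfun f ((0 : I) : ℝ) = ((0 : I) : ℝ)
  have h0 : ((0 : I) : ℝ) = 0 := rfl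
  rw [h0]
  have := gfun_eq_self f (⟨le_rfl, zero_le_one⟩ : (0:ℝ) ∈ Icc (0:ℝ) 1)
  rwa [psi_zero, zero_div] at this

lemma Phi_one : Phi f 1 = 1 := by
  refine Subtype.ext ?_
  show gfun f ((1 : I) : ℝ) = ((1 : I) : ℝ)
  have h1 : ((1 : I) : ℝ) = 1 := rfl
  rw [h1]
  exact gfun_one f

end PhiSec


noncomputable section StopSec

variable (f : ℕ → I)

lemma stop_lt {c : I} (n₀ : ℕ) (hn₀ : f n₀ = c) :
    sLt f (c : ℝ) + w n₀ ≤ sLe f (c : ℝ) := by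
  classical
  have hkey : ∀ n, (if (f n : ℝ) < (c:ℝ) then w n else 0) + (if n = n₀ then w n else 0) ≤
      (if (f n : ℝ) ≤ (c:ℝ) then w n else 0) := by
    intro n
    by_cases hn : n = n₀
    · subst hn
      rw [hn₀, if_neg (lt_irrefl _), if_pos rfl, if_pos le_rfl, zero_add]
    · rw [if_neg hn, add_zero]
      by_cases hlt : (f n : ℝ) < (c:ℝ)
      · rw [if_pos hlt, if_pos hlt.le]
      · rw [if_neg hlt]
        by_cases hle : (f n : ℝ) ≤ (c:ℝ) <;> simp [hle, (w_pos n).le]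
  have hsum := Summable.tsum_le_tsum hkey
    ((summable_ite (fun n => (f n : ℝ) < (c:ℝ))).add (summable_ite (fun n => n = n₀)))
    (summable_ite (fun n => (f n : ℝ) ≤ (c:ℝ)))
  rw [Summable.tsum_add (summable_ite (fun n => (f n : ℝ) < (c:ℝ))) (summable_ite (fun n => n = n₀))] at hsum
  have hT : (∑' n, if n = n₀ then w n else 0) = w n₀ := by
    have h : ∀ n, (if n = n₀ then w n else 0) = (if n = n₀ then w n₀ else 0) := by
      intro n; by_cases hn : n = n₀ <;> simp [hn]
    rw [tsum_ite_eq n₀ w]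
  rwa [hT] at hsum

lemma exists_stop {c : I} (n₀ : ℕ) (hn₀ : f n₀ = c) :
    ∃ a b : I, IsStopInterval (Phi f) a b ∧ Phi f a = c := by
  have haR0 : 0 ≤ psi f (c:ℝ) / 2 := by have := psi_nonneg f c.2.1; linarith
  have haR1 : psi f (c:ℝ) / 2 ≤ 1 := by have := psi_le_two f c.2.2; linarith
  have hbR0 : 0 ≤ ((c:ℝ) + sLe f (c:ℝ))/2 := by
    have := sLe_nonneg f (c:ℝ); have := c.2.1; linarith
  have hbR1 : ((c:ℝ) + sLe f (c:ℝ))/2 ≤ 1 := by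
    have := sLe_le_one f (c:ℝ); have := c.2.2; linarith
  have hablt : psi f (c:ℝ)/2 < ((c:ℝ) + sLe f (c:ℝ))/2 := by
    have h1 := stop_lt f n₀ hn₀
    have h2 := w_pos n₀
    show (↑c + sLt f ↑c)/2 < _
    linarith
  set a : I := ⟨psi f (c:ℝ) / 2, haR0, haR1⟩ with ha
  set b : I := ⟨((c:ℝ) + sLe f (c:ℝ))/2, hbR0, hbR1⟩ with hb
  have hab : a < b := Subtype.mk_lt_mk.mpr hablt
  have hval : ∀ t : I, a ≤ t → t ≤ b → Phi f t = c := by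
    intro t h1 h2
    refine Subtype.ext (gfun_const f c.2 ?_ ?_)
    · have : (a : ℝ) ≤ (t : ℝ) := h1
      show psi f (c:ℝ) ≤ 2 * (t:ℝ)
      rw [ha] at this; simp only at this; linarith
    · have : (t : ℝ) ≤ (b : ℝ) := h2
      rw [hb] at this; simp only at this; linarith
  have hconst : ConstOn (Phi f) a b := fun s hs t ht => by
    rw [hval s hs.1 hs.2, hval t ht.1 ht.2]
  refine ⟨a, b, ⟨hab, hconst, ?_⟩, hval a le_rfl hab.le⟩
  intro a' b' ha' hb' hconst'
  have haab : a ∈ Set.Icc a' b' := ⟨ha', le_trans hab.le hb'⟩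
  have hbab : b ∈ Set.Icc a' b' := ⟨le_trans ha' hab.le, hb'⟩
  have hpa' : Phi f a' = c := by
    rw [hconst' a' ⟨le_rfl, le_trans ha' haab.2⟩ a haab, hval a le_rfl hab.le]
  have hpb' : Phi f b' = c := by
    rw [hconst' b' ⟨le_trans hbab.1 hb', le_rfl⟩ b hbab, hval b hab.le le_rfl]
  constructor
  · by_contra hne
    have hlt : a' < a := lt_of_le_of_ne ha' hne
    have hltR : (a' : ℝ) < psi f (c:ℝ) / 2 := hlt
    have hε : 0 < psi f (c:ℝ) - 2*(a':ℝ) := by linarith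
    obtain ⟨x, hxc, hx⟩ := psi_left f (c:ℝ) hε
    have h2a : 2*(a':ℝ) ≤ psi f x := by linarith
    have hub : gfun f (a':ℝ) ≤ x := by
      refine csSup_le ⟨0, Aset_zero_mem f a'.2.1⟩ fun y hy => ?_
      by_contra hyx
      push_neg at hyx
      have := psi_gap f hyx.le
      have := hy.2
      linarith
    have hga : gfun f (a':ℝ) = (c:ℝ) := congrArg Subtype.val hpa'
    rw [hga] at hub
    linarith
  · by_contra hne
    have hlt : b < b' := lt_of_le_of_ne hb' (fun h => hne h.symm)
    by_cases hc1 : (c:ℝ) < 1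
    · have hltR : (b : ℝ) < (b' : ℝ) := hlt
      rw [hb] at hltR; simp only at hltR
      have hε : 0 < 2*(b':ℝ) - ((c:ℝ) + sLe f (c:ℝ)) := by linarith
      obtain ⟨x, hcx, hx1, hx⟩ := psi_right f c.2.1 hc1 hε
      have hxA : x ∈ Aset f (b':ℝ) := by
        refine ⟨⟨le_trans c.2.1 hcx.le, hx1⟩, ?_⟩
        linarith
      have hgb : gfun f (b':ℝ) = (c:ℝ) := congrArg Subtype.val hpb'
      have hle : x ≤ (c:ℝ) := by
        rw [← hgb]; exact le_csSup (Aset_bdd f _) hxA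
      linarith
    · have hc1' : (c:ℝ) = 1 := le_antisymm c.2.2 (not_lt.mp hc1)
      have hsle : sLe f (c:ℝ) = 1 := by
        unfold sLe
        have h : ∀ n, (if (f n : ℝ) ≤ (c:ℝ) then w n else 0) = w n := by
          intro n; rw [if_pos (by rw [hc1']; exact (f n).2.2)]
        rw [tsum_congr h, w_tsum]
      have hbone : (b : ℝ) = 1 := by
        rw [hb]; simp only; rw [hsle, hc1']; norm_num
      have : (b' : ℝ) ≤ 1 := b'.2.2
      have hltR : (b : ℝ) < (b' : ℝ) := hlt
      rw [hbone] at hltR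
      linarith

lemma stop_val_mem {a b : I} (h : IsStopInterval (Phi f) a b) :
    ∃ n, f n = Phi f a := by
  obtain ⟨hab, hconst, -⟩ := h
  set c : I := Phi f a with hc
  by_contra hnc
  push_neg at hnc
  have hcoe : ∀ n, (f n : ℝ) ≠ (c:ℝ) := fun n hn => hnc n (Subtype.ext hn)
  have hLe : sLe f (c:ℝ) = sLt f (c:ℝ) := by
    refine tsum_congr fun n => ?_
    by_cases hlt : (f n:ℝ) < (c:ℝ)
    · rw [if_pos hlt.le, if_pos hlt]
    · rw [if_neg, if_neg hlt]
      exact fun hle => hlt (lt_of_le_of_ne hle (hcoe n))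
  have hpb : Phi f b = c := hconst b ⟨hab.le, le_rfl⟩ a ⟨le_rfl, hab.le⟩
  have habR : (a : ℝ) < (b : ℝ) := hab
  have hlt2a : ∀ x : ℝ, x < (c:ℝ) → psi f x < 2*(a:ℝ) := by
    intro x hx
    rcases lt_or_ge x 0 with hx0 | hx0
    · have hpsix : psi f x = x := by
        unfold psi; rw [sLt_eq_zero f hx0.le, add_zero]
      have := a.2.1
      linarith [hpsix.le]
    · have hx1 : x ≤ 1 := le_trans hx.le c.2.2
      have ht0 : 0 ≤ psi f x / 2 := by have := psi_nonneg f hx0; linarith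
      have ht1 : psi f x / 2 ≤ 1 := by have := psi_le_two f hx1; linarith
      set t : I := ⟨psi f x / 2, ht0, ht1⟩ with ht
      have hφt : (Phi f t : ℝ) = x := gfun_eq_self f ⟨hx0, hx1⟩
      have hta : t < a := by
        by_contra hge
        push_neg at hge
        have hmono := Phi_mono f hge
        have : (c : ℝ) ≤ (Phi f t : ℝ) := Subtype.coe_le_coe.mpr hmono
        rw [hφt] at this
        linarith
      have : (t : ℝ) < (a : ℝ) := hta
      rw [ht] at this; simp only at this
      linarith
  have hgt2b : ∀ x : ℝ, (c:ℝ) < x → x ≤ 1 → 2*(b:ℝ) < psi f x := by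
    intro x hx hx1
    have hx0 : 0 ≤ x := le_trans c.2.1 hx.le
    have ht0 : 0 ≤ psi f x / 2 := by have := psi_nonneg f hx0; linarith
    have ht1 : psi f x / 2 ≤ 1 := by have := psi_le_two f hx1; linarith
    set t : I := ⟨psi f x / 2, ht0, ht1⟩ with ht
    have hφt : (Phi f t : ℝ) = x := gfun_eq_self f ⟨hx0, hx1⟩
    have htb : b < t := by
      by_contra hge
      push_neg at hge
      have hmono := Phi_mono f hge
      have : (Phi f t : ℝ) ≤ (c : ℝ) := by
        rw [← hpb]; exact Subtype.coe_le_coe.mpr hmono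
      rw [hφt] at this
      linarith
    have : (b : ℝ) < (t : ℝ) := htb
    rw [ht] at this; simp only at this
    linarith
  by_cases hc1 : (c:ℝ) < 1
  · have hε : 0 < ((b:ℝ) - (a:ℝ))/2 := by linarith
    obtain ⟨x, hxc, hx⟩ := psi_left f (c:ℝ) hε
    have h1 : psi f (c:ℝ) < 2*(a:ℝ) + ((b:ℝ)-(a:ℝ))/2 := by
      have := hlt2a x hxc; linarith
    obtain ⟨x', hcx', hx1', hx'⟩ := psi_right f c.2.1 hc1 hε
    have h2 : 2*(b:ℝ) < psi f (c:ℝ) + ((b:ℝ)-(a:ℝ))/2 := by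
      have := hgt2b x' hcx' hx1'
      rw [hLe] at hx'
      have hpsic : psi f (c:ℝ) = (c:ℝ) + sLt f (c:ℝ) := rfl
      linarith
    linarith
  · have hc1' : (c:ℝ) = 1 := le_antisymm c.2.2 (not_lt.mp hc1)
    have hsle : sLe f (c:ℝ) = 1 := by
      unfold sLe
      have h : ∀ n, (if (f n : ℝ) ≤ (c:ℝ) then w n else 0) = w n := by
        intro n; rw [if_pos (by rw [hc1']; exact (f n).2.2)]
      rw [tsum_congr h, w_tsum]
    have hpsic : psi f (c:ℝ) = 2 := by
      unfold psi; rw [← hLe, hsle, hc1']; norm_num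
    have hεa : 0 < 2 - 2*(a:ℝ) := by
      have := b.2.2; linarith
    obtain ⟨x, hxc, hx⟩ := psi_left f (c:ℝ) hεa
    have := hlt2a x hxc
    linarith

end StopSec

end AuxConstruction

/-- Every countable subset `C ⊆ I` is realized as the set of stop values
of some reparametrization `φ` of the unit interval. -/
theorem exists_repar_with_stopValues
    (C : Set I) (hC : C.Countable) :
    ∃ φ : I → I, IsRepar φ ∧ StopValues φ = C := by
  rcases Set.eq_empty_or_nonempty C with rfl | hne
  · refine ⟨id, ⟨continuous_id, monotone_id, rfl, rfl⟩, ?_⟩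
    ext c
    simp only [StopValues, Set.mem_setOf_eq, Set.mem_empty_iff_false, iff_false, not_exists]
    intro a b
    rintro ⟨⟨hab, hconst, -⟩, -⟩
    exact hab.ne (hconst a ⟨le_rfl, hab.le⟩ b ⟨hab.le, le_rfl⟩)
  · obtain ⟨f, hf⟩ := hC.exists_eq_range hne
    refine ⟨Phi f, ⟨(Phi_mono f).continuous_of_surjective (Phi_surj f), Phi_mono f,
      Phi_zero f, Phi_one f⟩, ?_⟩
    rw [hf]
    ext c
    constructor
    · rintro ⟨a, b, hstop, rfl⟩
      obtain ⟨n, hn⟩ := stop_val_mem f hstop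
      exact ⟨n, hn⟩
    · rintro ⟨n₀, rfl⟩
      obtain ⟨a, b, hstop, hval⟩ := exists_stop f n₀ rfl
      exact ⟨a, b, hstop, hval⟩
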